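/- Asymptotic root location for a perturbed quadratic in (T−t): let A, B, C ∈ ℝ with A ≠ 0 and B² − 4AC > 0, and let r(s, a) = o(s² + a²) as (s,a) → (0,0) be continuous. Then for each sufficiently small a ≠ 0 the equation A s² + B a s + C a² + r(s, a) = 0 has a solution s = s(a) satisfying s(a) = β a + o(a) for some root β ≠ 0 of A β² + B β + C = 0 (assuming the roots of Aβ²+Bβ+C are nonzero, i.e. C ≠ 0). -/

import Mathlib

set_option maxHeartbeats 1000000
open Filter Asymptotics
open scoped Topology

lemma uIcc_abs_aux (β ε a x : ℝ) (hε : 0 ≤ ε)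
    (hx : x ∈ Set.uIcc ((β + -ε) * a) ((β + ε) * a)) : |x - β * a| ≤ ε * |a| := by
  have h1 := mul_le_mul_of_nonneg_left (le_abs_self a) hε
  have h2 := mul_le_mul_of_nonneg_left (neg_abs_le a) hε
  rcases Set.mem_uIcc.mp hx with ⟨hl1, hl2⟩ | ⟨hl1, hl2⟩ <;>
    (rw [abs_le]; constructor <;> nlinarith)

/-- Asymptotic root location for a perturbed quadratic: if `A ≠ 0`, `C ≠ 0` and
`B² − 4AC > 0`, and `r(s,a) = o(s² + a²)` at `(0,0)` with `r` continuous, then there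
is a nonzero root `β` of `Aβ² + Bβ + C = 0` and, for all sufficiently small `a ≠ 0`,
a solution `s(a)` of `A s² + B a s + C a² + r(s,a) = 0` with `s(a) = βa + o(a)`. -/
theorem perturbed_quadratic_root (A B C : ℝ) (hA : A ≠ 0) (hC : C ≠ 0)
    (hdisc : 0 < B ^ 2 - 4 * A * C)
    (r : ℝ × ℝ → ℝ) (hrcont : Continuous r)
    (hr : (fun p : ℝ × ℝ => r p) =o[𝓝 (0, 0)] fun p : ℝ × ℝ => p.1 ^ 2 + p.2 ^ 2) :
    ∃ β : ℝ, β ≠ 0 ∧ A * β ^ 2 + B * β + C = 0 ∧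
      ∃ s : ℝ → ℝ,
        (∀ᶠ a in 𝓝[≠] (0 : ℝ),
          A * (s a) ^ 2 + B * a * (s a) + C * a ^ 2 + r (s a, a) = 0) ∧
        (fun a => s a - β * a) =o[𝓝 (0 : ℝ)] fun a => a := by
  classical
  obtain ⟨D, hDpos, hDsq⟩ : ∃ D : ℝ, 0 < D ∧ D ^ 2 = B ^ 2 - 4 * A * C :=
    ⟨Real.sqrt (B ^ 2 - 4 * A * C), Real.sqrt_pos.mpr hdisc, Real.sq_sqrt hdisc.le⟩
  obtain ⟨β, hroot, hsum⟩ : ∃ β : ℝ, A * β ^ 2 + B * β + C = 0 ∧ 2 * A * β + B = D := by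
    refine ⟨(D - B) / (2 * A), ?_, ?_⟩
    · field_simp
      ring_nf
      nlinarith [hDsq, sq_nonneg A]
    · field_simp; ring
  have hβne : β ≠ 0 := by
    intro h
    rw [h] at hroot
    simp at hroot
    exact hC hroot
  refine ⟨β, hβne, hroot, ?_⟩
  set q : ℝ → ℝ → ℝ := fun x a => A * x ^ 2 + B * a * x + C * a ^ 2 + r (x, a) with hq
  have hAabs : (0:ℝ) ≤ |A| := abs_nonneg A
  obtain ⟨ε₀, hε₀pos, hε₀le⟩ : ∃ e : ℝ, 0 < e ∧ 2 * (|A| + 1) * e ≤ D := by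
    refine ⟨D / (2 * (|A| + 1)), by positivity, ?_⟩
    rw [mul_div_cancel₀]
    positivity
  obtain ⟨K, hKpos, hKge⟩ : ∃ K : ℝ, 0 < K ∧ (|β| + ε₀) ^ 2 + 1 ≤ K :=
    ⟨(|β| + ε₀) ^ 2 + 1, by positivity, le_rfl⟩
  have hqcont : ∀ a, Continuous fun x : ℝ => q x a := by
    intro a
    simp only [hq]
    exact ((((continuous_const.mul (continuous_pow 2)).add
      (continuous_const.mul continuous_id)).add continuous_const).add
      (hrcont.comp (continuous_id.prodMk continuous_const)))
  -- key lemma: roots exist close to β*a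
  have key : ∀ ε : ℝ, 0 < ε → ε ≤ ε₀ → ∀ᶠ a in 𝓝 (0:ℝ),
      ∃ x, q x a = 0 ∧ |x - β * a| ≤ ε * |a| := by
    intro ε hε hεle
    have hc : 0 < D * ε / (2 * K) := by positivity
    have hrb := (isLittleO_iff.mp hr) hc
    have hcurve : ∀ t : ℝ, Tendsto (fun a : ℝ => ((β + t) * a, a)) (𝓝 0) (𝓝 ((0:ℝ),(0:ℝ))) := by
      intro t
      have hcont2 : Continuous (fun a : ℝ => ((β + t) * a, a)) :=
        (continuous_const.mul continuous_id).prodMk continuous_id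
      have h := hcont2.tendsto 0
      simpa using h
    have h1 := (hcurve ε).eventually hrb
    have h2 := (hcurve (-ε)).eventually hrb
    filter_upwards [h1, h2] with a ha1 ha2
    simp only [Real.norm_eq_abs] at ha1 ha2
    -- bounds on the nonlinearity at the two endpoints
    have hb1 : |β + ε| ≤ |β| + ε₀ := by
      refine (abs_add_le β ε).trans ?_
      rw [abs_of_pos hε]; linarith
    have hb2 : |β + -ε| ≤ |β| + ε₀ := by
      refine (abs_add_le β (-ε)).trans ?_
      rw [abs_neg, abs_of_pos hε]; linarith
    have hsq1 : (β + ε) ^ 2 ≤ (|β| + ε₀) ^ 2 := by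
      nlinarith [sq_abs (β + ε), abs_nonneg (β + ε)]
    have hsq2 : (β + -ε) ^ 2 ≤ (|β| + ε₀) ^ 2 := by
      nlinarith [sq_abs (β + -ε), abs_nonneg (β + -ε)]
    have habs1 : ((β + ε) * a) ^ 2 + a ^ 2 ≤ K * a ^ 2 := by
      nlinarith [mul_le_mul_of_nonneg_right hsq1 (sq_nonneg a),
        mul_le_mul_of_nonneg_right hKge (sq_nonneg a)]
    have habs2 : ((β + -ε) * a) ^ 2 + a ^ 2 ≤ K * a ^ 2 := by
      nlinarith [mul_le_mul_of_nonneg_right hsq2 (sq_nonneg a),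
        mul_le_mul_of_nonneg_right hKge (sq_nonneg a)]
    have hr1 : |r ((β + ε) * a, a)| ≤ D * ε / 2 * a ^ 2 := by
      have hpos : (0:ℝ) ≤ ((β + ε) * a) ^ 2 + a ^ 2 := by positivity
      calc |r ((β + ε) * a, a)| ≤ D * ε / (2 * K) * |((β + ε) * a) ^ 2 + a ^ 2| := ha1
        _ = D * ε / (2 * K) * (((β + ε) * a) ^ 2 + a ^ 2) := by rw [abs_of_nonneg hpos]
        _ ≤ D * ε / (2 * K) * (K * a ^ 2) := mul_le_mul_of_nonneg_left habs1 hc.le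
        _ = D * ε / 2 * a ^ 2 := by field_simp
    have hr2 : |r ((β + -ε) * a, a)| ≤ D * ε / 2 * a ^ 2 := by
      have hpos : (0:ℝ) ≤ ((β + -ε) * a) ^ 2 + a ^ 2 := by positivity
      calc |r ((β + -ε) * a, a)| ≤ D * ε / (2 * K) * |((β + -ε) * a) ^ 2 + a ^ 2| := ha2
        _ = D * ε / (2 * K) * (((β + -ε) * a) ^ 2 + a ^ 2) := by rw [abs_of_nonneg hpos]
        _ ≤ D * ε / (2 * K) * (K * a ^ 2) := mul_le_mul_of_nonneg_left habs2 hc.le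
        _ = D * ε / 2 * a ^ 2 := by field_simp
    by_cases ha : a = 0
    · subst ha
      have hr00 : r (0, 0) = 0 := by
        have h0 := hr1
        simp only [mul_zero, zero_mul, ne_eq, OfNat.ofNat_ne_zero, not_false_eq_true,
          zero_pow] at h0
        have := abs_nonneg (r ((β + ε) * 0, 0))
        have hx : |r ((β + ε) * 0, 0)| = 0 := le_antisymm (by simpa using h0) this
        simpa using abs_eq_zero.mp hx
      exact ⟨0, by simpa [hq] using hr00, by simp⟩
    · -- IVT between the two endpoints
      have hAehalf : |A| * ε ≤ D / 2 := by
        have h1 : |A| * ε ≤ |A| * ε₀ := mul_le_mul_of_nonneg_left hεle hAabs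
        nlinarith [hε₀pos]
      have hAe2 : |A| * ε ^ 2 ≤ D * ε / 2 := by
        nlinarith [mul_le_mul_of_nonneg_right hAehalf hε.le]
      have hA' : -(D * ε / 2) ≤ A * ε ^ 2 := by
        nlinarith [neg_abs_le A, sq_nonneg ε]
      have hA'' : A * ε ^ 2 ≤ D * ε / 2 := by
        nlinarith [le_abs_self A, sq_nonneg ε]
      have hqv : q ((β + ε) * a) a = a ^ 2 * (ε * D + A * ε ^ 2) + r ((β + ε) * a, a) := by
        simp only [hq]
        linear_combination (a ^ 2) * hroot + (a ^ 2 * ε) * hsum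
      have hqu : q ((β + -ε) * a) a = a ^ 2 * (-(ε * D) + A * ε ^ 2) + r ((β + -ε) * a, a) := by
        simp only [hq]
        linear_combination (a ^ 2) * hroot - (a ^ 2 * ε) * hsum
      have hvpos : 0 ≤ q ((β + ε) * a) a := by
        rw [hqv]
        nlinarith [(abs_le.mp hr1).1, mul_le_mul_of_nonneg_left hA' (sq_nonneg a)]
      have hupos : q ((β + -ε) * a) a ≤ 0 := by
        rw [hqu]
        nlinarith [(abs_le.mp hr2).2, mul_le_mul_of_nonneg_left hA'' (sq_nonneg a)]
      have hmem : (0:ℝ) ∈ Set.uIcc (q ((β + -ε) * a) a) (q ((β + ε) * a) a) :=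
        Set.mem_uIcc.mpr (Or.inl ⟨hupos, hvpos⟩)
      obtain ⟨x, hxmem, hx0⟩ := intermediate_value_uIcc ((hqcont a).continuousOn) hmem
      exact ⟨x, hx0, uIcc_abs_aux β ε a x hε.le hxmem⟩
  -- compact sets of candidate roots and choice of a minimizing root
  set Z : ℝ → Set ℝ := fun a => {x | q x a = 0} ∩ Metric.closedBall (β * a) (ε₀ * |a|) with hZ
  have hZmem : ∀ a x, x ∈ Z a ↔ q x a = 0 ∧ |x - β * a| ≤ ε₀ * |a| := by
    intro a x
    simp [hZ, Metric.mem_closedBall, Real.dist_eq]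
  have hZcompact : ∀ a, IsCompact (Z a) := fun a =>
    (isCompact_closedBall _ _).inter_left (isClosed_eq (hqcont a) continuous_const)
  have hsel : ∀ a : ℝ, ∃ x : ℝ, (Z a).Nonempty →
      x ∈ Z a ∧ ∀ y ∈ Z a, |x - β * a| ≤ |y - β * a| := by
    intro a
    by_cases h : (Z a).Nonempty
    · obtain ⟨x, hx, hmin⟩ := (hZcompact a).exists_isMinOn h
        ((continuous_id.sub continuous_const).abs.continuousOn)
      exact ⟨x, fun _ => ⟨hx, fun y hy => hmin hy⟩⟩
    · exact ⟨0, fun h' => absurd h' h⟩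
  choose s hs using hsel
  refine ⟨s, ?_, ?_⟩
  · filter_upwards [(key ε₀ hε₀pos le_rfl).filter_mono nhdsWithin_le_nhds] with a ha
    obtain ⟨x, hx0, hxb⟩ := ha
    have hne : (Z a).Nonempty := ⟨x, (hZmem a x).mpr ⟨hx0, hxb⟩⟩
    have h := ((hZmem a (s a)).mp (hs a hne).1).1
    simpa only [hq] using h
  · rw [isLittleO_iff]
    intro c hc
    have hεpos : 0 < min c ε₀ := lt_min hc hε₀pos
    filter_upwards [key (min c ε₀) hεpos (min_le_right _ _)] with a ha
    obtain ⟨x, hx0, hxb⟩ := ha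
    have hxb' : |x - β * a| ≤ ε₀ * |a| :=
      hxb.trans (mul_le_mul_of_nonneg_right (min_le_right _ _) (abs_nonneg a))
    have hne : (Z a).Nonempty := ⟨x, (hZmem a x).mpr ⟨hx0, hxb'⟩⟩
    have hmin := (hs a hne).2 x ((hZmem a x).mpr ⟨hx0, hxb'⟩)
    have h : |s a - β * a| ≤ c * |a| :=
      hmin.trans (hxb.trans (mul_le_mul_of_nonneg_right (min_le_left _ _) (abs_nonneg a)))
    simpa [Real.norm_eq_abs] using h
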